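/- Under the hypotheses of the previous approximate-isometry lemma, if additionally x·y ≥ γ for some 0 < γ ≤ 1 and ε = γ/8, then f(x)·f(y) ≥ γ/2; and if x·y ≤ −γ then f(x)·f(y) ≤ −γ/2. -/
import Mathlib


open scoped RealInnerProductSpace

/-- Margin preservation under approximate isometry: with `ε = γ/8`, a linear map that
approximately preserves the pairwise distances among `x`, `y`, `0` preserves the sign of
an inner product of magnitude at least `γ`, with margin at least `γ/2`. -/
theorem approx_isometry_margin_preservation
    {N k : ℕ} (x y : EuclideanSpace ℝ (Fin N))
    (hx : ‖x‖ = 1) (hy : ‖y‖ = 1)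
    (γ : ℝ) (hγ0 : 0 < γ) (hγ1 : γ ≤ 1)
    (f : EuclideanSpace ℝ (Fin N) →ₗ[ℝ] EuclideanSpace ℝ (Fin k))
    (hiso : ∀ z ∈ ({x, y, 0} : Set (EuclideanSpace ℝ (Fin N))),
      ∀ z' ∈ ({x, y, 0} : Set (EuclideanSpace ℝ (Fin N))),
        (1 - γ / 8) * ‖z - z'‖ ^ 2 ≤ ‖f z - f z'‖ ^ 2 ∧
        ‖f z - f z'‖ ^ 2 ≤ (1 + γ / 8) * ‖z - z'‖ ^ 2) :
    (γ ≤ ⟪x, y⟫ → γ / 2 ≤ ⟪f x, f y⟫) ∧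
    (⟪x, y⟫ ≤ -γ → ⟪f x, f y⟫ ≤ -(γ / 2)) := by
  have h1 := hiso x (by simp) 0 (by simp)
  have h2 := hiso y (by simp) 0 (by simp)
  have h3 := hiso x (by simp) y (by simp)
  simp only [map_zero, sub_zero] at h1 h2
  rw [hx] at h1; rw [hy] at h2
  have e1 : ‖x - y‖^2 = 2 - 2*⟪x,y⟫ := by
    rw [@norm_sub_sq_real]; rw [hx, hy]; ring
  have e2 : ‖f x - f y‖^2 = ‖f x‖^2 + ‖f y‖^2 - 2*⟪f x, f y⟫ := by
    rw [@norm_sub_sq_real]; ring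
  rw [e1, e2] at h3
  constructor <;> intro h <;> nlinarith [h1.1, h1.2, h2.1, h2.2, h3.1, h3.2]
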